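/- arXiv:1710.03852 — 3 statements merged into one kernel-verified Lean document; each statement's English description precedes it below -/
import Mathlib

section
/- Let V be a finite set with decidable equality, let F : V → ℝ satisfy F(i) ≥ 0 for all i ∈ V, and let α ≥ 0 be a real number. For a finite subset S ⊆ V with |S| = m, let a_1 ≥ a_2 ≥ ⋯ ≥ a_m be the multiset of values {F(i) : i ∈ S} listed in nonincreasing order, and define Φ(S) = Σ_{r=1}^{m} r^{−α} · a_r (so the value of rank r is discounted by the factor r^{−α}). Then Φ is nonnegative, monotone and submodular. -/
/-- The power-law aggregation (Eqn. 4 of the paper): list the values `F i` for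
`i ∈ S` in nonincreasing order `a_1 ≥ a_2 ≥ ⋯ ≥ a_m` and return
`∑_{r=1}^m r^{-α} · a_r` (the value of rank `r` is discounted by `r^{-α}`). -/
noncomputable def powerLawAgg {V : Type*} [DecidableEq V] (F : V → ℝ) (α : ℝ)
    (S : Finset V) : ℝ :=
  let l : List ℝ := ((S.val.map F).sort (· ≤ ·)).reverse
  ∑ r ∈ Finset.range l.length, ((r : ℝ) + 1) ^ (-α) * l.getD r 0


noncomputable def pw (α : ℝ) (k : ℕ) : ℝ := ((k : ℝ) + 1) ^ (-α)
lemma pw_pos (α : ℝ) (k : ℕ) : 0 < pw α k := Real.rpow_pos_of_pos (by positivity) _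
lemma pw_succ_le (α : ℝ) (hα : 0 ≤ α) (k : ℕ) : pw α (k + 1) ≤ pw α k := by
  unfold pw
  apply Real.rpow_le_rpow_of_nonpos (by positivity) (by push_cast; linarith) (neg_nonpos.2 hα)
lemma pw_convex (α : ℝ) (hα : 0 ≤ α) (k : ℕ) :
    2 * pw α (k + 1) ≤ pw α k + pw α (k + 2) := by
  have ha : (0:ℝ) < (k : ℝ) + 1 := by positivity
  have hb : (0:ℝ) < (k : ℝ) + 2 := by positivity
  have hc : (0:ℝ) < (k : ℝ) + 3 := by positivity
  have e1 : pw α k = ((k:ℝ) + 1) ^ (-α) := rfl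
  have e2 : pw α (k + 1) = ((k:ℝ) + 2) ^ (-α) := by unfold pw; push_cast; ring_nf
  have e3 : pw α (k + 2) = ((k:ℝ) + 3) ^ (-α) := by unfold pw; push_cast; ring_nf
  have key : pw α (k+1) ^ 2 ≤ pw α k * pw α (k + 2) := by
    rw [e1, e2, e3, ← Real.mul_rpow ha.le hc.le, sq, ← Real.mul_rpow hb.le hb.le]
    apply Real.rpow_le_rpow_of_nonpos (by positivity) (by nlinarith) (neg_nonpos.2 hα)
  have h1 := pw_pos α k
  have h2 := pw_pos α (k+1)
  have h3 := pw_pos α (k+2)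
  nlinarith [sq_nonneg (pw α k - pw α (k+2)), sq_nonneg (pw α k + pw α (k+2) - 2 * pw α (k+1))]
noncomputable def phi (α : ℝ) : ℕ → List ℝ → ℝ
  | _, [] => 0
  | k, x :: l => pw α k * x + phi α (k + 1) l
@[simp] lemma phi_nil (α : ℝ) (k : ℕ) : phi α k [] = 0 := rfl
@[simp] lemma phi_cons (α : ℝ) (k : ℕ) (x : ℝ) (l : List ℝ) :
    phi α k (x :: l) = pw α k * x + phi α (k + 1) l := rfl

variable {α : ℝ}

lemma phi_nonneg (hα : 0 ≤ α) : ∀ (l : List ℝ), (∀ z ∈ l, 0 ≤ z) → ∀ k, 0 ≤ phi α k l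
  | [], _, _ => le_refl 0
  | x :: l, h, k => by
    have hx := h x (by simp)
    have := phi_nonneg hα l (fun z hz => h z (by simp [hz])) (k + 1)
    have h3 := (pw_pos α k).le
    simp only [phi_cons]
    nlinarith

lemma E_nonneg (hα : 0 ≤ α) : ∀ (l : List ℝ), (∀ z ∈ l, 0 ≤ z) → ∀ k,
    phi α (k + 1) l ≤ phi α k l
  | [], _, _ => le_refl 0
  | x :: l, h, k => by
    have hx := h x (by simp)
    have h2 := E_nonneg hα l (fun z hz => h z (by simp [hz])) (k + 1)
    have h3 := pw_succ_le α hα k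
    simp only [phi_cons]
    nlinarith

lemma E_le (hα : 0 ≤ α) : ∀ (l : List ℝ) (y : ℝ), 0 ≤ y → (∀ z ∈ l, z ≤ y) → ∀ k,
    phi α k l - phi α (k + 1) l ≤ pw α k * y
  | [], y, hy, _, k => by
    simp only [phi_nil, sub_zero]
    exact mul_nonneg (pw_pos α k).le hy
  | x :: l, y, hy, h, k => by
    have hx := h x (by simp)
    have h2 := E_le hα l y hy (fun z hz => h z (by simp [hz])) (k + 1)
    have h3 := pw_succ_le α hα k
    simp only [phi_cons]
    nlinarith

lemma E_diff_le (hα : 0 ≤ α) : ∀ (l : List ℝ) (y : ℝ), 0 ≤ y →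
    (∀ z ∈ l, 0 ≤ z ∧ z ≤ y) → ∀ k,
    (phi α k l - phi α (k + 1) l) - (phi α (k + 1) l - phi α (k + 2) l) ≤
      (pw α k - pw α (k + 1)) * y
  | [], y, hy, _, k => by
    have h3 := pw_succ_le α hα k
    simp only [phi_nil]
    nlinarith
  | x :: l, y, hy, h, k => by
    obtain ⟨hx0, hxy⟩ := h x (by simp)
    have h2 := E_diff_le hα l y hy (fun z hz => h z (by simp [hz])) (k + 1)
    have h3 := pw_convex α hα k
    have h4 := pw_succ_le α hα (k + 1)
    simp only [phi_cons]
    have hsd : (pw α k - 2 * pw α (k + 1) + pw α (k + 2)) * x ≤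
        (pw α k - 2 * pw α (k + 1) + pw α (k + 2)) * y := by
      apply mul_le_mul_of_nonneg_left hxy; linarith
    have e1 : k + 1 + 1 = k + 2 := rfl
    have e2 : k + 2 + 1 = k + 1 + 2 := rfl
    rw [e1] at h2 ⊢
    rw [e2] at h2 ⊢
    nlinarith

noncomputable abbrev insD (x : ℝ) (l : List ℝ) : List ℝ := l.orderedInsert (· ≥ ·) x

lemma insD_cons_pos {x a : ℝ} (l : List ℝ) (h : x ≥ a) :
    insD x (a :: l) = x :: a :: l := by
  simp [List.orderedInsert, h]
lemma insD_cons_neg {x a : ℝ} (l : List ℝ) (h : ¬ x ≥ a) :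
    insD x (a :: l) = a :: insD x l := by
  simp [List.orderedInsert, h]

lemma sorted_bounds {a : ℝ} {l : List ℝ} (hs : List.Pairwise (· ≥ ·) (a :: l))
    (h0 : ∀ z ∈ a :: l, 0 ≤ z) {y : ℝ} (hy : a ≤ y) : ∀ z ∈ a :: l, 0 ≤ z ∧ z ≤ y := by
  intro z hz
  refine ⟨h0 z hz, ?_⟩
  rcases List.mem_cons.mp hz with rfl | hz
  · exact hy
  · exact le_trans (List.rel_of_pairwise_cons hs hz) hy

lemma D_anti (hα : 0 ≤ α) : ∀ (l : List ℝ) (x : ℝ), 0 ≤ x → List.Pairwise (· ≥ ·) l →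
    (∀ z ∈ l, 0 ≤ z) → ∀ k,
    phi α (k + 1) (insD x l) - phi α (k + 1) l ≤ phi α k (insD x l) - phi α k l
  | [], x, hx, _, _, k => by
    have := pw_succ_le α hα k
    simp only [List.orderedInsert, phi_cons, phi_nil]
    nlinarith
  | a :: l, x, hx, hs, h0, k => by
    by_cases h : x ≥ a
    · rw [insD_cons_pos l h]
      have hb := E_diff_le hα (a :: l) x hx (sorted_bounds hs h0 h) k
      simp only [phi_cons] at *
      nlinarith
    · rw [insD_cons_neg l h]
      have ih := D_anti hα l x hx (List.pairwise_cons.mp hs).2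
        (fun z hz => h0 z (by simp [hz])) (k + 1)
      simp only [phi_cons]
      linarith

lemma phi_insD_ge (hα : 0 ≤ α) : ∀ (l : List ℝ) (x : ℝ), 0 ≤ x →
    List.Pairwise (· ≥ ·) l → (∀ z ∈ l, 0 ≤ z) → ∀ k,
    phi α k l ≤ phi α k (insD x l)
  | [], x, hx, _, _, k => by
    simp only [List.orderedInsert, phi_cons, phi_nil]
    nlinarith [(pw_pos α k).le]
  | a :: l, x, hx, hs, h0, k => by
    by_cases h : x ≥ a
    · rw [insD_cons_pos l h]
      have hb := E_le hα (a :: l) x hx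
        (fun z hz => ((sorted_bounds hs h0 h) z hz).2) k
      simp only [phi_cons] at *
      nlinarith
    · rw [insD_cons_neg l h]
      have ih := phi_insD_ge hα l x hx (List.pairwise_cons.mp hs).2
        (fun z hz => h0 z (by simp [hz])) (k + 1)
      simp only [phi_cons]
      linarith

lemma submod_core (hα : 0 ≤ α) : ∀ (l : List ℝ) (x y : ℝ), 0 ≤ y → y ≤ x →
    List.Pairwise (· ≥ ·) l → (∀ z ∈ l, 0 ≤ z) → ∀ k,
    phi α k (insD x (insD y l)) + phi α k l ≤ phi α k (insD x l) + phi α k (insD y l)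
  | [], x, y, hy, hyx, _, _, k => by
    rw [show insD y [] = [y] from rfl, insD_cons_pos [] hyx,
      show insD x [] = [x] from rfl]
    have := pw_succ_le α hα k
    simp only [phi_cons, phi_nil]
    nlinarith
  | a :: l, x, y, hy, hyx, hs, h0, k => by
    by_cases hya : y ≥ a
    · have hxa : x ≥ a := le_trans hya hyx
      rw [insD_cons_pos l hya, insD_cons_pos (a :: l) hyx, insD_cons_pos l hxa]
      have hb := E_diff_le hα (a :: l) y hy (sorted_bounds hs h0 hya) k
      simp only [phi_cons] at *
      nlinarith
    · by_cases hxa : x ≥ a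
      · rw [insD_cons_neg l hya, insD_cons_pos (insD y l) hxa,
          insD_cons_pos l hxa]
        have hd := D_anti hα l y hy (List.pairwise_cons.mp hs).2
          (fun z hz => h0 z (by simp [hz])) (k + 1)
        simp only [phi_cons] at *
        linarith
      · rw [insD_cons_neg l hya, insD_cons_neg (insD y l) hxa, insD_cons_neg l hxa]
        have ih := submod_core hα l x y hy hyx (List.pairwise_cons.mp hs).2
          (fun z hz => h0 z (by simp [hz])) (k + 1)
        simp only [phi_cons]
        linarith

noncomputable def sortD (M : Multiset ℝ) : List ℝ := (M.sort (· ≤ ·)).reverse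

lemma sortD_sorted (M : Multiset ℝ) : List.Pairwise (· ≥ ·) (sortD M) := by
  rw [sortD, List.pairwise_reverse]
  exact (Multiset.pairwise_sort M (· ≤ ·)).imp fun h => h

lemma sortD_coe (M : Multiset ℝ) : (↑(sortD M) : Multiset ℝ) = M := by
  rw [sortD, Multiset.coe_reverse, Multiset.sort_eq]

lemma sortD_mem {M : Multiset ℝ} {z : ℝ} : z ∈ sortD M ↔ z ∈ M := by
  rw [← Multiset.mem_coe, sortD_coe]

lemma sortD_cons (x : ℝ) (M : Multiset ℝ) : sortD (x ::ₘ M) = insD x (sortD M) := by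
  apply List.Perm.eq_of_pairwise' (l₂ := insD x (sortD M)) (sortD_sorted _)
    ((sortD_sorted M).orderedInsert x _) ?_
  apply Multiset.coe_eq_coe.mp
  rw [sortD_coe]
  have h1 : (↑(insD x (sortD M)) : Multiset ℝ) = ↑(x :: sortD M) :=
    Multiset.coe_eq_coe.mpr (List.perm_orderedInsert _ x _)
  rw [h1, ← Multiset.cons_coe, sortD_coe]

noncomputable def Psi (α : ℝ) (M : Multiset ℝ) : ℝ := phi α 0 (sortD M)

lemma Psi_nonneg (hα : 0 ≤ α) (M : Multiset ℝ) (h0 : ∀ z ∈ M, 0 ≤ z) : 0 ≤ Psi α M :=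
  phi_nonneg hα _ (fun z hz => h0 z (sortD_mem.mp hz)) 0

lemma Psi_le_cons (hα : 0 ≤ α) (M : Multiset ℝ) (x : ℝ) (hx : 0 ≤ x)
    (h0 : ∀ z ∈ M, 0 ≤ z) : Psi α M ≤ Psi α (x ::ₘ M) := by
  rw [Psi, Psi, sortD_cons]
  exact phi_insD_ge hα _ x hx (sortD_sorted M) (fun z hz => h0 z (sortD_mem.mp hz)) 0

lemma Psi_submod_cons (hα : 0 ≤ α) (M : Multiset ℝ) (x y : ℝ) (hx : 0 ≤ x) (hy : 0 ≤ y)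
    (h0 : ∀ z ∈ M, 0 ≤ z) :
    Psi α (x ::ₘ y ::ₘ M) + Psi α M ≤ Psi α (x ::ₘ M) + Psi α (y ::ₘ M) := by
  have key : ∀ u v : ℝ, 0 ≤ v → v ≤ u →
      Psi α (u ::ₘ v ::ₘ M) + Psi α M ≤ Psi α (u ::ₘ M) + Psi α (v ::ₘ M) := by
    intro u v hv hvu
    simp only [Psi, sortD_cons]
    exact submod_core hα (sortD M) u v hv hvu (sortD_sorted M)
      (fun z hz => h0 z (sortD_mem.mp hz)) 0
  rcases le_total y x with h | h
  · exact key x y hy h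
  · rw [Multiset.cons_swap]
    linarith [key y x hx h]

lemma Psi_mono (hα : 0 ≤ α) (M K : Multiset ℝ) (h0 : ∀ z ∈ M + K, 0 ≤ z) :
    Psi α M ≤ Psi α (M + K) := by
  induction K using Multiset.induction_on with
  | empty => simp
  | cons a K ih =>
    rw [show M + a ::ₘ K = a ::ₘ (M + K) by
      rw [Multiset.add_cons]]
    refine le_trans (ih ?_) (Psi_le_cons hα (M + K) a ?_ ?_)
    · intro z hz; exact h0 z (by rw [Multiset.add_cons]; exact Multiset.mem_cons_of_mem hz)
    · exact h0 a (by rw [Multiset.add_cons]; exact Multiset.mem_cons_self _ _)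
    · intro z hz; exact h0 z (by rw [Multiset.add_cons]; exact Multiset.mem_cons_of_mem hz)

lemma Psi_submod (hα : 0 ≤ α) (M K : Multiset ℝ) (x : ℝ) (hx : 0 ≤ x)
    (h0 : ∀ z ∈ M + K, 0 ≤ z) :
    Psi α (x ::ₘ (M + K)) - Psi α (M + K) ≤ Psi α (x ::ₘ M) - Psi α M := by
  induction K using Multiset.induction_on with
  | empty => simp
  | cons a K ih =>
    have hmem : ∀ z ∈ M + K, 0 ≤ z := fun z hz =>
      h0 z (by rw [Multiset.add_cons]; exact Multiset.mem_cons_of_mem hz)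
    have ha : 0 ≤ a := h0 a (by rw [Multiset.add_cons]; exact Multiset.mem_cons_self _ _)
    have step := Psi_submod_cons hα (M + K) x a hx ha hmem
    have ih' := ih hmem
    rw [show M + a ::ₘ K = a ::ₘ (M + K) by rw [Multiset.add_cons]]
    linarith

lemma phi_eq_sum : ∀ (l : List ℝ) (k : ℕ),
    phi α k l = ∑ r ∈ Finset.range l.length, pw α (k + r) * l.getD r 0
  | [], k => by simp
  | x :: l, k => by
    rw [List.length_cons, Finset.sum_range_succ']
    simp only [List.getD_cons_succ, List.getD_cons_zero, add_zero]
    rw [phi_cons, phi_eq_sum l (k + 1), add_comm]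
    congr 1
    exact Finset.sum_congr rfl fun r _ => by rw [show k + 1 + r = k + (r + 1) by omega]

lemma powerLawAgg_eq {V : Type*} [DecidableEq V] (F : V → ℝ) (α : ℝ) (S : Finset V) :
    powerLawAgg F α S = Psi α (S.val.map F) := by
  rw [powerLawAgg, Psi, phi_eq_sum]
  simp [pw, sortD]

/-- Theorem 2 of the paper: for nonnegative ratings `F` and exponent `α ≥ 0`,
the power-law aggregation is nonnegative, monotone and submodular. -/
theorem powerLawAgg_nonneg_monotone_submodular
    {V : Type*} [Fintype V] [DecidableEq V] (F : V → ℝ) (hF : ∀ i, 0 ≤ F i)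
    (α : ℝ) (hα : 0 ≤ α) :
    (∀ S : Finset V, 0 ≤ powerLawAgg F α S) ∧
    (∀ X Y : Finset V, X ⊆ Y → powerLawAgg F α X ≤ powerLawAgg F α Y) ∧
    (∀ (X Y : Finset V) (v : V), X ⊆ Y → v ∉ Y →
      powerLawAgg F α (insert v Y) - powerLawAgg F α Y ≤
      powerLawAgg F α (insert v X) - powerLawAgg F α X) := by
  have hmem : ∀ (M : Multiset V), ∀ z ∈ M.map F, 0 ≤ z := by
    intro M z hz
    obtain ⟨i, _, rfl⟩ := Multiset.mem_map.mp hz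
    exact hF i
  refine ⟨fun S => ?_, fun X Y hXY => ?_, fun X Y v hXY hvY => ?_⟩
  · rw [powerLawAgg_eq]
    exact Psi_nonneg hα _ (hmem _)
  · rw [powerLawAgg_eq, powerLawAgg_eq]
    have hle : X.val.map F ≤ Y.val.map F :=
      Multiset.map_le_map (Finset.val_le_iff.mpr hXY)
    obtain ⟨K, hK⟩ := Multiset.le_iff_exists_add.mp hle
    rw [hK]
    exact Psi_mono hα _ K (by rw [← hK]; exact hmem _)
  · have hvX : v ∉ X := fun h => hvY (hXY h)
    rw [powerLawAgg_eq, powerLawAgg_eq, powerLawAgg_eq, powerLawAgg_eq,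
      Finset.insert_val_of_notMem hvY, Finset.insert_val_of_notMem hvX,
      Multiset.map_cons, Multiset.map_cons]
    have hle : X.val.map F ≤ Y.val.map F :=
      Multiset.map_le_map (Finset.val_le_iff.mpr hXY)
    obtain ⟨K, hK⟩ := Multiset.le_iff_exists_add.mp hle
    rw [hK]
    exact Psi_submod hα _ K (F v) (hF v) (by rw [← hK]; exact hmem _)
end

section
/- Let U be a finite set enumerated as i_1, …, i_m, let f : Finset U → ℝ be monotone and submodular with f(∅) = 0, let c : U → ℝ with c(i) > 0 for all i, and let B ≥ 0 be a budget with Σ_{j=1}^{m} c(i_j) > B. Set δ_j = f({i_j}) and assume the enumeration is sorted by decreasing ratio, i.e. δ_1/c(i_1) ≥ δ_2/c(i_2) ≥ ⋯ ≥ δ_m/c(i_m). Let l be the index such that C := Σ_{j=1}^{l−1} c(i_j) ≤ B and Σ_{j=1}^{l} c(i_j) > B, and set λ = (B − C)/c(i_l). Then for every S ⊆ U with Σ_{i∈S} c(i) ≤ B, one has f(S) ≤ Σ_{j=1}^{l−1} δ_j + λ·δ_l. -/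
/-- Theorem 4 of the paper: the online fractional-knapsack upper bound
`UP = ∑_{j<l} δ_j + λ·δ_l` dominates the optimum of budget-constrained
submodular maximization.  The ground set `U = {i_1, …, i_m}` is modeled as
`Fin m`, `δ j = f {j}`, and items are sorted by decreasing ratio `δ_j / c_j`. -/
theorem online_upper_bound
    (m : ℕ) (f : Finset (Fin m) → ℝ)
    (hempty : f ∅ = 0)
    (hmono : ∀ X Y : Finset (Fin m), X ⊆ Y → f X ≤ f Y)
    (hsub : ∀ (X Y : Finset (Fin m)) (v : Fin m), X ⊆ Y → v ∉ Y →
      f (insert v Y) - f Y ≤ f (insert v X) - f X)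
    (c : Fin m → ℝ) (hc : ∀ j, 0 < c j)
    (B : ℝ) (hB : 0 ≤ B) (htotal : B < ∑ j, c j)
    (hsorted : ∀ j k : Fin m, j ≤ k → f {k} / c k ≤ f {j} / c j)
    (l : Fin m)
    (hC : ∑ j ∈ Finset.Iio l, c j ≤ B)
    (hCl : B < ∑ j ∈ Finset.Iic l, c j)
    (S : Finset (Fin m)) (hS : ∑ i ∈ S, c i ≤ B) :
    f S ≤ (∑ j ∈ Finset.Iio l, f {j}) +
      (B - ∑ j ∈ Finset.Iio l, c j) / c l * f {l} := by
  -- Step 1: subadditivity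
  have hsubadd : ∀ T : Finset (Fin m), f T ≤ ∑ i ∈ T, f {i} := by
    intro T
    induction T using Finset.induction_on with
    | empty => simp [hempty]
    | @insert v T' hv ih =>
      rw [Finset.sum_insert hv]
      have h1 := hsub ∅ T' v (Finset.empty_subset _) hv
      simp only [hempty, sub_zero] at h1
      have h2 : (insert v (∅ : Finset (Fin m))) = {v} := rfl
      rw [h2] at h1
      linarith
  set ρ := f {l} / c l with hρ
  have hρ0 : 0 ≤ ρ := div_nonneg (by rw [← hempty]; exact hmono _ _ (Finset.empty_subset _)) (hc l).le
  -- for i < l, ρ * c i ≤ f {i}; for l ≤ i, f {i} ≤ ρ * c i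
  have hlo : ∀ i : Fin m, i < l → ρ * c i ≤ f {i} := by
    intro i hi
    have := hsorted i l hi.le
    rw [div_le_div_iff₀ (hc l) (hc i)] at this
    rw [hρ, div_mul_eq_mul_div, div_le_iff₀ (hc l)]
    linarith
  have hhi : ∀ i : Fin m, l ≤ i → f {i} ≤ ρ * c i := by
    intro i hi
    have := hsorted l i hi
    rw [div_le_div_iff₀ (hc i) (hc l)] at this
    rw [hρ, div_mul_eq_mul_div, le_div_iff₀ (hc l)]
    linarith
  have key : ∑ i ∈ S, (f {i} - ρ * c i) ≤ ∑ i ∈ Finset.Iio l, (f {i} - ρ * c i) := by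
    have hsplit := Finset.sum_filter_add_sum_filter_not S (· < l) (fun i => f {i} - ρ * c i)
    have h2 : ∑ i ∈ S.filter (fun i => ¬ i < l), (f {i} - ρ * c i) ≤ 0 := by
      apply Finset.sum_nonpos
      intro i hi
      simp only [Finset.mem_filter, not_lt] at hi
      linarith [hhi i hi.2]
    have h3 : ∑ i ∈ S.filter (· < l), (f {i} - ρ * c i)
        ≤ ∑ i ∈ Finset.Iio l, (f {i} - ρ * c i) := by
      apply Finset.sum_le_sum_of_subset_of_nonneg
      · intro i hi
        simp only [Finset.mem_filter] at hi
        exact Finset.mem_Iio.mpr hi.2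
      · intro i hi _
        linarith [hlo i (Finset.mem_Iio.mp hi)]
    linarith
  have hsum : ∑ i ∈ S, f {i} = ∑ i ∈ S, (f {i} - ρ * c i) + ρ * ∑ i ∈ S, c i := by
    rw [Finset.mul_sum, ← Finset.sum_add_distrib]
    apply Finset.sum_congr rfl; intros; ring
  have hIio : ∑ i ∈ Finset.Iio l, (f {i} - ρ * c i)
      = ∑ i ∈ Finset.Iio l, f {i} - ρ * ∑ i ∈ Finset.Iio l, c i := by
    rw [Finset.mul_sum, ← Finset.sum_sub_distrib]
  have hρB : ρ * ∑ i ∈ S, c i ≤ ρ * B := mul_le_mul_of_nonneg_left hS hρ0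
  have hfin : (B - ∑ j ∈ Finset.Iio l, c j) / c l * f {l}
      = ρ * (B - ∑ j ∈ Finset.Iio l, c j) := by
    rw [hρ]; field_simp
  calc f S ≤ ∑ i ∈ S, f {i} := hsubadd S
    _ = ∑ i ∈ S, (f {i} - ρ * c i) + ρ * ∑ i ∈ S, c i := hsum
    _ ≤ ∑ i ∈ Finset.Iio l, (f {i} - ρ * c i) + ρ * B := by linarith
    _ = ∑ j ∈ Finset.Iio l, f {j} + ρ * (B - ∑ j ∈ Finset.Iio l, c j) := by
        rw [hIio]; ring
    _ = _ := by rw [hfin]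
end

section
/- Let v_0, v_1, …, v_m (m ≥ 1) be the vertices, in order, of a path in a directed graph with nonnegative edge costs t, so that each (v_k, v_{k+1}) is an edge of the graph. For a vertex v, let minOut(v) denote the minimum cost over out-edges of v and minIn(v) the minimum cost over in-edges of v (these minima exist since v_0, …, v_{m−1} each have an out-edge on the path and v_1, …, v_m each have an in-edge on the path). Then minOut(v_0)/2 + Σ_{k=1}^{m−1} (minIn(v_k)/2 + minOut(v_k)/2) + minIn(v_m)/2 ≤ Σ_{k=0}^{m−1} t(v_k, v_{k+1}). -/
/-- The per-POI cost underestimation behind Pruning-2 of the paper: for any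
path `v_0, …, v_m` (`m ≥ 1`) in a directed graph with nonnegative edge costs,
charging half of the minimum out-edge cost of the start, half of the minimum
in-edge cost of the end, and half of the minimum in- and out-edge costs of each
internal vertex never exceeds the true traveling cost of the path. -/
theorem half_min_edge_lower_bound
    {V : Type*} (E : V → V → Prop) (t : V → V → ℝ)
    (ht : ∀ a b, 0 ≤ t a b)
    (m : ℕ) (hm : 1 ≤ m) (v : ℕ → V)
    (hpath : ∀ k, k < m → E (v k) (v (k + 1)))
    (minOut minIn : V → ℝ)
    (hOutLB : ∀ a b, E a b → minOut a ≤ t a b)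
    (hOutMem : ∀ a, (∃ b, E a b) → ∃ b, E a b ∧ minOut a = t a b)
    (hInLB : ∀ a b, E a b → minIn b ≤ t a b)
    (hInMem : ∀ b, (∃ a, E a b) → ∃ a, E a b ∧ minIn b = t a b) :
    minOut (v 0) / 2 +
      (∑ k ∈ Finset.Ico 1 m, (minIn (v k) / 2 + minOut (v k) / 2)) +
      minIn (v m) / 2 ≤ ∑ k ∈ Finset.range m, t (v k) (v (k + 1)) := by
  have heq : minOut (v 0) / 2 +
      (∑ k ∈ Finset.Ico 1 m, (minIn (v k) / 2 + minOut (v k) / 2)) +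
      minIn (v m) / 2
      = ∑ k ∈ Finset.range m, (minOut (v k) / 2 + minIn (v (k + 1)) / 2) := by
    have h1 : ∑ k ∈ Finset.range m, (minOut (v k) / 2 + minIn (v (k + 1)) / 2)
        = (∑ k ∈ Finset.range m, minOut (v k) / 2)
          + ∑ k ∈ Finset.range m, minIn (v (k + 1)) / 2 :=
      Finset.sum_add_distrib
    have h2 : ∑ k ∈ Finset.range m, minOut (v k) / 2
        = minOut (v 0) / 2 + ∑ k ∈ Finset.Ico 1 m, minOut (v k) / 2 := by
      rw [Finset.range_eq_Ico, Finset.sum_eq_sum_Ico_succ_bot hm]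
    have h3 : ∑ k ∈ Finset.range m, minIn (v (k + 1)) / 2
        = (∑ k ∈ Finset.Ico 1 m, minIn (v k) / 2) + minIn (v m) / 2 := by
      have := Finset.sum_Ico_eq_sum_range
        (f := fun k => minIn (v k) / 2) (m := 1) (n := m + 1)
      have h4 : ∑ k ∈ Finset.Ico 1 (m + 1), minIn (v k) / 2
          = (∑ k ∈ Finset.Ico 1 m, minIn (v k) / 2) + minIn (v m) / 2 :=
        Finset.sum_Ico_succ_top hm _
      simp only [Nat.add_sub_cancel] at this
      rw [← h4, this]
      simp [add_comm]
    rw [h1, h2, h3, Finset.sum_add_distrib]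
    ring
  rw [heq]
  apply Finset.sum_le_sum
  intro k hk
  have he := hpath k (Finset.mem_range.mp hk)
  have := hOutLB _ _ he
  have := hInLB _ _ he
  linarith
end
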